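/- Let d, N ≥ 1, let a_1,…,a_N, b_1,…,b_N ∈ {0,1}^d and c ∈ {0,1}^d. Define M ∈ ℝ^{(N+1)×(N+1)} by M_{ij} = −∑_{s=1}^d a_i[s]·b_j[s]·c[s] for i, j ≤ N, and M_{ij} = 0 whenever i = N+1 or j = N+1. Let w ∈ ℝ^{N+1} with w_j = 1 for j ≤ N and w_{N+1} = 2. For i ≤ N let t_i be the number of indices j ≤ N with ∑_{s=1}^d a_i[s]·b_j[s]·c[s] = 0. Then (hardmax(M)·w)_i = (t_i + 2)/(t_i + 1) for every i ≤ N, and (hardmax(M)·w)_{N+1} = (N + 2)/(N + 1). -/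

import Mathlib

open scoped BigOperators
open Classical

/-- hardmax(v)_i = 1/|I_max(v)| if v_i attains the maximum, and 0 otherwise. -/
noncomputable def hardmax {n : ℕ} (v : Fin n → ℝ) : Fin n → ℝ :=
  fun i => if v i = ⨆ j, v j then
    1 / ((Finset.univ.filter fun j => v j = ⨆ j', v j').card : ℝ)
  else 0

/-- Row-wise hardmax of a matrix. -/
noncomputable def mhardmax {n k : ℕ} (A : Matrix (Fin n) (Fin k) ℝ) :
    Matrix (Fin n) (Fin k) ℝ :=
  Matrix.of fun i => hardmax (A i)

lemma sup_eq_zero_of {n : ℕ} (v : Fin (n + 1) → ℝ) (h0 : ∀ j, v j ≤ 0)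
    (j0 : Fin (n + 1)) (hj0 : v j0 = 0) : (⨆ j, v j) = 0 := by
  refine le_antisymm (ciSup_le h0) ?_
  rw [← hj0]
  exact le_ciSup (Set.Finite.bddAbove (Set.finite_range v)) j0

/-- The hardmax-attention gadget of the 3-OV reduction: with
`M_{ij} = −∑_s a_i[s]·b_j[s]·c[s]` for `i,j ≤ N`, `M` zero on the last row and column,
and `w = (1,…,1,2)`, the product `hardmax(M)·w` equals `(t_i+2)/(t_i+1)` in coordinate
`i ≤ N` (where `t_i` counts the `j` with `∑_s a_i[s]·b_j[s]·c[s] = 0`) and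
`(N+2)/(N+1)` in the last coordinate. -/
theorem hardmax_attention_threeOV_gadget {d N : ℕ} (hd : 1 ≤ d) (hN : 1 ≤ N)
    (a b : Fin N → Fin d → ℝ) (c : Fin d → ℝ)
    (ha : ∀ i s, a i s = 0 ∨ a i s = 1)
    (hb : ∀ j s, b j s = 0 ∨ b j s = 1)
    (hc : ∀ s, c s = 0 ∨ c s = 1)
    (M : Matrix (Fin (N + 1)) (Fin (N + 1)) ℝ)
    (hM : ∀ i j : Fin N, M i.castSucc j.castSucc = -∑ s, a i s * b j s * c s)
    (hMrow : ∀ j : Fin (N + 1), M (Fin.last N) j = 0)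
    (hMcol : ∀ i : Fin (N + 1), M i (Fin.last N) = 0)
    (w : Fin (N + 1) → ℝ)
    (hw : ∀ j : Fin N, w j.castSucc = 1) (hwlast : w (Fin.last N) = 2)
    (t : Fin N → ℕ)
    (ht : ∀ i, t i = (Finset.univ.filter
      fun j : Fin N => (∑ s, a i s * b j s * c s) = 0).card) :
    (∀ i : Fin N,
      (mhardmax M).mulVec w i.castSucc = ((t i : ℝ) + 2) / ((t i : ℝ) + 1)) ∧
    (mhardmax M).mulVec w (Fin.last N) = ((N : ℝ) + 2) / ((N : ℝ) + 1) := by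
  have habc : ∀ i j : Fin N, 0 ≤ ∑ s, a i s * b j s * c s := by
    intro i j
    apply Finset.sum_nonneg
    intro s _
    have h1 : (0:ℝ) ≤ a i s := by rcases ha i s with h | h <;> simp [h]
    have h2 : (0:ℝ) ≤ b j s := by rcases hb j s with h | h <;> simp [h]
    have h3 : (0:ℝ) ≤ c s := by rcases hc s with h | h <;> simp [h]
    exact mul_nonneg (mul_nonneg h1 h2) h3
  have hMle : ∀ i j : Fin (N + 1), M i j ≤ 0 := by
    intro i j
    induction i using Fin.lastCases with
    | last => rw [hMrow]
    | cast i =>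
      induction j using Fin.lastCases with
      | last => rw [hMcol]
      | cast j => rw [hM]; linarith [habc i j]
  have hsup : ∀ i : Fin (N + 1), (⨆ j, M i j) = 0 := fun i =>
    sup_eq_zero_of (M i) (hMle i) (Fin.last N) (hMcol i)
  have hcard : ∀ i : Fin N,
      ((Finset.univ.filter fun j => M i.castSucc j = 0).card : ℝ) = (t i : ℝ) + 1 := by
    intro i
    rw [ht]
    have : (Finset.univ.filter fun j => M i.castSucc j = 0).card =
        (Finset.univ.filter
          fun j : Fin N => (∑ s, a i s * b j s * c s) = 0).card + 1 := by
      rw [Finset.card_filter, Finset.card_filter, Fin.sum_univ_castSucc]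
      simp [hM, hMcol, neg_eq_zero]
    rw [this]
    push_cast
    ring
  have key : ∀ i : Fin (N + 1), (mhardmax M).mulVec w i =
      ∑ j, (if M i j = 0 then
        (1 / ((Finset.univ.filter fun j' => M i j' = 0).card : ℝ)) else 0) * w j := by
    intro i
    simp only [Matrix.mulVec, dotProduct, mhardmax, hardmax, Matrix.of_apply,
      hsup i]
  constructor
  · intro i
    rw [key, Fin.sum_univ_castSucc]
    have hne : (t i : ℝ) + 1 ≠ 0 := by positivity
    simp only [hcard i, hMcol, if_true, hwlast, hw]
    have h1 : ∀ j : Fin N, (if M i.castSucc j.castSucc = 0 then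
        (1 / ((t i : ℝ) + 1)) else 0) * 1 =
        (if (∑ s, a i s * b j s * c s) = 0 then (1 / ((t i : ℝ) + 1)) else 0) := by
      intro j
      rw [mul_one, hM]
      simp [neg_eq_zero]
    rw [Finset.sum_congr rfl (fun j _ => h1 j)]
    rw [← Finset.sum_filter, Finset.sum_const, ← ht i]
    simp only [nsmul_eq_mul, eq_self_iff_true, if_true]
    field_simp
  · rw [key, Fin.sum_univ_castSucc]
    have hNe : (N : ℝ) + 1 ≠ 0 := by positivity
    have hcardlast : ((Finset.univ.filter fun j => M (Fin.last N) j = 0).card : ℝ)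
        = (N : ℝ) + 1 := by
      have : (Finset.univ.filter fun j : Fin (N+1) => M (Fin.last N) j = 0) =
          Finset.univ := by
        apply Finset.filter_true_of_mem
        intro j _
        exact hMrow j
      rw [this]
      simp
    simp only [hcardlast, hMrow, if_true, hwlast, hw, mul_one]
    rw [Finset.sum_const]
    simp only [Finset.card_univ, Fintype.card_fin, nsmul_eq_mul]
    field_simp
    simp
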